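/- Let m ≥ 1 be an integer and let H be a subharmonic real-valued homogeneous polynomial of degree 2m containing no harmonic terms with ‖H‖ = 1. Let η_n ∈ M_H with η_n → (0,0), η_{n,1} ≠ 0 for all n, and ε(η_n)/|η_{n,1}|^{2m} → 0. Suppose there exist integers j₀, q₀ ≥ 1 with j₀ + q₀ < 2m and constants c, C > 0 such that c|η_{n,1}|^{2m−j₀−q₀} ≤ |H_{j₀,q̄₀}(η_{n,1})| ≤ C|η_{n,1}|^{2m−j₀−q₀} for all n. Then τ(η_n)/ε(η_n)^{1/(2m)} → 0 as n → ∞; in particular, for every j with 1 ≤ j ≤ 2m−1 the degree-2m coefficient a_{2m−j} τ(η_n)^{2m}/ε(η_n) of the rescaled polynomial H_{η_n} tends to 0. -/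

import Mathlib

open Complex Finset Metric Filter Topology Asymptotics
open scoped ENNReal NNReal

noncomputable section

/-- `Hpoly m a z = Σ_{j=1}^{2m-1} a_{2m-j} z^j conj(z)^{2m-j}`. -/
def Hpoly (m : ℕ) (a : ℕ → ℂ) (z : ℂ) : ℂ :=
  ∑ j ∈ Finset.Icc 1 (2 * m - 1), a (2 * m - j) * z ^ j * (starRingEnd ℂ z) ^ (2 * m - j)

/-- The coefficients `a` give a real-valued polynomial that is not identically zero. -/
def GoodCoeff (m : ℕ) (a : ℕ → ℂ) : Prop :=
  (∀ j ∈ Finset.Icc 1 (2 * m - 1), a j = starRingEnd ℂ (a (2 * m - j))) ∧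
  (∃ j ∈ Finset.Icc 1 (2 * m - 1), a j ≠ 0)

/-- Subharmonicity: the Laplacian is a nonnegative real number at every point. -/
def SubharmonicCoeff (m : ℕ) (a : ℕ → ℂ) : Prop :=
  ∀ z : ℂ,
    ((4 : ℂ) * ∑ j ∈ Finset.Icc 1 (2 * m - 1),
      (j : ℂ) * ((2 * m - j : ℕ) : ℂ) * a (2 * m - j) * z ^ (j - 1) *
        (starRingEnd ℂ z) ^ (2 * m - j - 1)).im = 0 ∧
    0 ≤ ((4 : ℂ) * ∑ j ∈ Finset.Icc 1 (2 * m - 1),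
      (j : ℂ) * ((2 * m - j : ℕ) : ℂ) * a (2 * m - j) * z ^ (j - 1) *
        (starRingEnd ℂ z) ^ (2 * m - j - 1)).re

/-- The model domain `M_H`. -/
def modelM (H : ℂ → ℝ) : Set (ℂ × ℂ) := {z : ℂ × ℂ | z.2.re + H z.1 < 0}

/-- The tube domain `Ω_m`. -/
def OmegaM (m : ℕ) : Set (ℂ × ℂ) := {z : ℂ × ℂ | z.2.re + z.1.re ^ (2 * m) < 0}

/-- `f` is a biholomorphism from `Ω₁` onto `Ω₂`. -/
def IsBiholoOn (Ω₁ Ω₂ : Set (ℂ × ℂ)) (f : ℂ × ℂ → ℂ × ℂ) : Prop :=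
  DifferentiableOn ℂ f Ω₁ ∧ Set.MapsTo f Ω₁ Ω₂ ∧
    ∃ g : ℂ × ℂ → ℂ × ℂ, DifferentiableOn ℂ g Ω₂ ∧ Set.MapsTo g Ω₂ Ω₁ ∧
      (∀ z ∈ Ω₁, g (f z) = z) ∧ (∀ w ∈ Ω₂, f (g w) = w)

/-- `f` is an automorphism of `Ω`. -/
def IsAutomorphismOf (Ω : Set (ℂ × ℂ)) (f : ℂ × ℂ → ℂ × ℂ) : Prop :=
  IsBiholoOn Ω Ω f

/-- Mixed Wirtinger derivative `H_{j,q̄}`. -/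
def Hmix (m : ℕ) (a : ℕ → ℂ) (j q : ℕ) (z : ℂ) : ℂ :=
  ∑ k ∈ (Finset.Icc j (2 * m - 1)).filter (fun k => q ≤ 2 * m - k),
    a (2 * m - k) * (k.descFactorial j : ℂ) * ((2 * m - k).descFactorial q : ℂ) *
      z ^ (k - j) * (starRingEnd ℂ z) ^ (2 * m - k - q)

/-- Holomorphic Wirtinger derivative `H_j`. -/
def Hhol (m : ℕ) (a : ℕ → ℂ) (j : ℕ) (z : ℂ) : ℂ :=
  ∑ k ∈ Finset.Icc j (2 * m - 1),
    a (2 * m - k) * (k.descFactorial j : ℂ) * z ^ (k - j) * (starRingEnd ℂ z) ^ (2 * m - k)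

/-- `ε(a) = |Re a₂ + H(a₁)|`. -/
def epsAt (H : ℂ → ℝ) (p : ℂ × ℂ) : ℝ := |p.2.re + H p.1|

/-- The `(j,q)` coefficient of the rescaled polynomial `H_{a,τ}`. -/
def scaledCoeff (m : ℕ) (a : ℕ → ℂ) (H : ℂ → ℝ) (p : ℂ × ℂ) (τ : ℝ) (j q : ℕ) : ℂ :=
  Hmix m a j q p.1 * (τ : ℂ) ^ (j + q) /
    ((j.factorial : ℂ) * (q.factorial : ℂ) * (epsAt H p : ℂ))

/-- Index pairs `(j,q)` with `j, q ≥ 1` and `j + q ≤ 2m`. -/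
def coeffPairs (m : ℕ) : Finset (ℕ × ℕ) :=
  (Finset.Icc 1 (2 * m) ×ˢ Finset.Icc 1 (2 * m)).filter (fun jq => jq.1 + jq.2 ≤ 2 * m)

/-- `‖H_{a,τ}‖`, the maximum modulus of the coefficients of the rescaled polynomial. -/
def HscaledNorm (m : ℕ) (a : ℕ → ℂ) (H : ℂ → ℝ) (p : ℂ × ℂ) (τ : ℝ) : ℝ :=
  (((coeffPairs m).sup fun jq =>
    Real.toNNReal (‖scaledCoeff m a H p τ jq.1 jq.2‖)) : ℝ≥0)

/-- Vanishing order at `0 ∈ ℂ` of a map, via big-O estimates. -/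
def vOrder {E : Type*} [NormedAddCommGroup E] (u : ℂ → E) : ℝ≥0∞ :=
  sSup {c : ℝ≥0∞ | ∃ k : ℕ, c = (k : ℝ≥0∞) ∧ u =O[𝓝 (0 : ℂ)] fun z : ℂ => ‖z‖ ^ k}

/-- The D'Angelo type of `∂M_H` at `p`. -/
def dAngeloType (H : ℂ → ℝ) (p : ℂ × ℂ) : ℝ≥0∞ :=
  ⨆ (γ : ℂ → ℂ × ℂ) (_ : ∃ r > 0, DifferentiableOn ℂ γ (Metric.ball 0 r) ∧
      γ 0 = p ∧ ¬ ∀ z ∈ Metric.ball (0 : ℂ) r, γ z = p),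
    vOrder (fun t => ((γ t).2.re + H (γ t).1 : ℝ)) / vOrder (fun t => γ t - p)


lemma tendsto_zero_of_pow_tendsto_zero {f : ℕ → ℝ} (hf : ∀ n, 0 ≤ f n) {N : ℕ}
    (hN : 0 < N) (h : Filter.Tendsto (fun n => f n ^ N) Filter.atTop (𝓝 0)) :
    Filter.Tendsto f Filter.atTop (𝓝 0) := by
  rw [Metric.tendsto_atTop] at h ⊢
  intro ε hε
  obtain ⟨M, hM⟩ := h (ε ^ N) (by positivity)
  refine ⟨M, fun n hn => ?_⟩
  have h1 := hM n hn
  rw [Real.dist_eq, sub_zero, _root_.abs_of_nonneg (pow_nonneg (hf n) N)] at h1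
  rw [Real.dist_eq, sub_zero, _root_.abs_of_nonneg (hf n)]
  by_contra hcon
  push_neg at hcon
  exact absurd h1 (not_lt.mpr (pow_le_pow_left₀ hε.le hcon N))

/-- along a sequence converging tangentially to order `> 2m`, if some mixed
derivative of order `< 2m` is comparable to `|η_{n,1}|^{2m−j₀−q₀}`, then
`τ(η_n) = o(ε(η_n)^{1/2m})` and the top-degree rescaled coefficients tend to `0`. -/
theorem statement_17 (m : ℕ) (hm : 1 ≤ m) (a : ℕ → ℂ) (H : ℂ → ℝ)
    (hH : ∀ z : ℂ, (H z : ℂ) = Hpoly m a z)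
    (hgood : GoodCoeff m a) (hsub : SubharmonicCoeff m a)
    (hnorm : (((Finset.Icc 1 (2 * m - 1)).sup fun j =>
      Real.toNNReal (‖a j‖)) : ℝ≥0) = 1)
    (η : ℕ → ℂ × ℂ) (hη : ∀ n, η n ∈ modelM H)
    (hηlim : Filter.Tendsto η Filter.atTop (𝓝 ((0 : ℂ), (0 : ℂ))))
    (hη1 : ∀ n, (η n).1 ≠ 0)
    (hratio : Filter.Tendsto (fun n => epsAt H (η n) / ‖(η n).1‖ ^ (2 * m))
      Filter.atTop (𝓝 0))
    (j₀ q₀ : ℕ) (hj₀ : 1 ≤ j₀) (hq₀ : 1 ≤ q₀) (hj₀q₀ : j₀ + q₀ < 2 * m)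
    (c C : ℝ) (hc : 0 < c) (hC : 0 < C)
    (hcomp : ∀ n, c * ‖(η n).1‖ ^ (2 * m - j₀ - q₀) ≤
        ‖Hmix m a j₀ q₀ (η n).1‖ ∧
      ‖Hmix m a j₀ q₀ (η n).1‖ ≤
        C * ‖(η n).1‖ ^ (2 * m - j₀ - q₀))
    (τn : ℕ → ℝ) (hτ : ∀ n, 0 < τn n ∧ HscaledNorm m a H (η n) (τn n) = 1) :
    Filter.Tendsto (fun n => τn n / epsAt H (η n) ^ ((1 : ℝ) / (2 * (m : ℝ))))
      Filter.atTop (𝓝 0) ∧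
    ∀ j ∈ Finset.Icc 1 (2 * m - 1),
      Filter.Tendsto (fun n => a (2 * m - j) * ((τn n : ℝ) : ℂ) ^ (2 * m) /
          ((epsAt H (η n) : ℝ) : ℂ))
        Filter.atTop (𝓝 0) := by
  have hm0 : (m : ℝ) ≠ 0 := by positivity
  set s := j₀ + q₀ with hs
  obtain ⟨t, ht, ht1⟩ : ∃ t, 2 * m = s + t ∧ 1 ≤ t := ⟨2 * m - s, by omega, by omega⟩
  have hs1 : 1 ≤ s := by omega
  have he : ∀ n, 0 < epsAt H (η n) := by
    intro n
    have h0 := hη n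
    simp only [modelM, Set.mem_setOf_eq] at h0
    simp only [epsAt]
    exact abs_pos.mpr h0.ne
  have hA : ∀ n, 0 < ‖(η n).1‖ := fun n => norm_pos_iff.mpr (hη1 n)
  set D : ℝ := (j₀.factorial : ℝ) * (q₀.factorial : ℝ) with hD_def
  have hD : 0 < D := by positivity
  -- key per-n bound : τ^s * A^t ≤ (D/c) * ε
  have hkey : ∀ n, τn n ^ s * ‖(η n).1‖ ^ t ≤ D / c * epsAt H (η n) := by
    intro n
    have hsup : ((coeffPairs m).sup fun jq =>
        Real.toNNReal (‖scaledCoeff m a H (η n) (τn n) jq.1 jq.2‖)) = 1 := by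
      have h2 := (hτ n).2
      unfold HscaledNorm at h2
      exact_mod_cast h2
    have hmem : (j₀, q₀) ∈ coeffPairs m := by
      simp only [coeffPairs, Finset.mem_filter, Finset.mem_product, Finset.mem_Icc]
      omega
    have h1 : ‖scaledCoeff m a H (η n) (τn n) j₀ q₀‖ ≤ 1 := by
      have h2 := Finset.le_sup (f := fun jq : ℕ × ℕ =>
        Real.toNNReal (‖scaledCoeff m a H (η n) (τn n) jq.1 jq.2‖)) hmem
      rw [hsup] at h2
      calc ‖scaledCoeff m a H (η n) (τn n) j₀ q₀‖
          = ((Real.toNNReal (‖scaledCoeff m a H (η n) (τn n) j₀ q₀‖) : ℝ≥0) : ℝ) :=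
            (Real.coe_toNNReal _ (by positivity)).symm
        _ ≤ 1 := by exact_mod_cast h2
    have habs : ‖scaledCoeff m a H (η n) (τn n) j₀ q₀‖ =
        ‖Hmix m a j₀ q₀ (η n).1‖ * τn n ^ s / (D * epsAt H (η n)) := by
      unfold scaledCoeff
      rw [norm_div, norm_mul, norm_mul, norm_mul, norm_pow]
      rw [Complex.norm_real, Real.norm_eq_abs, Complex.norm_real, Real.norm_eq_abs, Complex.norm_natCast, Complex.norm_natCast]
      rw [_root_.abs_of_pos (hτ n).1, _root_.abs_of_pos (he n)]
    rw [habs] at h1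
    rw [div_le_one (mul_pos hD (he n))] at h1
    have h3 : c * ‖(η n).1‖ ^ t ≤ ‖Hmix m a j₀ q₀ (η n).1‖ := by
      have h4 := (hcomp n).1
      have h5 : 2 * m - j₀ - q₀ = t := by omega
      rwa [h5] at h4
    have h6 : c * ‖(η n).1‖ ^ t * τn n ^ s ≤ D * epsAt H (η n) := by
      calc c * ‖(η n).1‖ ^ t * τn n ^ s
          ≤ ‖Hmix m a j₀ q₀ (η n).1‖ * τn n ^ s :=
            mul_le_mul_of_nonneg_right h3 (pow_nonneg (hτ n).1.le s)
        _ ≤ 1 * (D * epsAt H (η n)) := by linarith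
        _ = D * epsAt H (η n) := one_mul _
    rw [div_mul_eq_mul_div, le_div_iff₀ hc]
    calc τn n ^ s * ‖(η n).1‖ ^ t * c
        = c * ‖(η n).1‖ ^ t * τn n ^ s := by ring
      _ ≤ D * epsAt H (η n) := h6
  -- the main sequence and its power
  set N : ℕ := s * (2 * m) with hN_def
  have hN : 0 < N := by positivity
  have hfN : ∀ n, (τn n / epsAt H (η n) ^ ((1 : ℝ) / (2 * (m : ℝ)))) ^ N =
      τn n ^ N / epsAt H (η n) ^ s := by
    intro n
    rw [div_pow]
    congr 1
    rw [← Real.rpow_natCast (epsAt H (η n) ^ ((1 : ℝ) / (2 * (m : ℝ)))) N,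
      ← Real.rpow_mul (he n).le, ← Real.rpow_natCast (epsAt H (η n)) s]
    congr 1
    rw [hN_def]
    push_cast
    field_simp
  have hbound : ∀ n, (τn n / epsAt H (η n) ^ ((1 : ℝ) / (2 * (m : ℝ)))) ^ N ≤
      (D / c) ^ (2 * m) * (epsAt H (η n) / ‖(η n).1‖ ^ (2 * m)) ^ t := by
    intro n
    rw [hfN n]
    have hApos : (0:ℝ) < ‖(η n).1‖ ^ (2 * m) := pow_pos (hA n) _
    rw [div_pow (epsAt H (η n)), ← mul_div_assoc,
      div_le_div_iff₀ (pow_pos (he n) s) (pow_pos hApos t)]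
    have lhs_eq : τn n ^ N * (‖(η n).1‖ ^ (2 * m)) ^ t =
        (τn n ^ s * ‖(η n).1‖ ^ t) ^ (2 * m) := by
      rw [hN_def]; ring
    have rhs_eq : (D / c) ^ (2 * m) * epsAt H (η n) ^ t * epsAt H (η n) ^ s =
        (D / c * epsAt H (η n)) ^ (2 * m) := by
      rw [ht]; ring
    rw [lhs_eq, rhs_eq]
    exact pow_le_pow_left₀
      (mul_nonneg (pow_nonneg (hτ n).1.le s) (pow_nonneg (norm_nonneg _) t))
      (hkey n) _
  have hlim : Filter.Tendsto (fun n => (D / c) ^ (2 * m) *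
      (epsAt H (η n) / ‖(η n).1‖ ^ (2 * m)) ^ t) Filter.atTop (𝓝 0) := by
    have h := (hratio.pow t).const_mul ((D / c) ^ (2 * m))
    simpa [zero_pow (by omega : t ≠ 0)] using h
  have hpow0 : Filter.Tendsto
      (fun n => (τn n / epsAt H (η n) ^ ((1 : ℝ) / (2 * (m : ℝ)))) ^ N)
      Filter.atTop (𝓝 0) := by
    exact squeeze_zero
      (fun n => pow_nonneg (div_nonneg (hτ n).1.le
        (Real.rpow_nonneg (he n).le _)) N) hbound hlim
  have part1 : Filter.Tendsto (fun n => τn n / epsAt H (η n) ^ ((1 : ℝ) / (2 * (m : ℝ))))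
      Filter.atTop (𝓝 0) := by
    apply tendsto_zero_of_pow_tendsto_zero (fun n => ?_) hN hpow0
    have := (hτ n).1
    have := Real.rpow_nonneg (he n).le ((1 : ℝ) / (2 * (m : ℝ)))
    positivity
  refine ⟨part1, ?_⟩
  intro j hj
  rw [Finset.mem_Icc] at hj
  have haj : ‖a (2 * m - j)‖ ≤ 1 := by
    have hmemj : 2 * m - j ∈ Finset.Icc 1 (2 * m - 1) := by
      rw [Finset.mem_Icc]; omega
    have h2 := Finset.le_sup (f := fun j => Real.toNNReal (‖a j‖)) hmemj
    have hnorm' : ((Finset.Icc 1 (2 * m - 1)).sup fun j =>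
        Real.toNNReal (‖a j‖)) = 1 := by exact_mod_cast hnorm
    rw [hnorm'] at h2
    calc ‖a (2 * m - j)‖
        = ((Real.toNNReal (‖a (2 * m - j)‖) : ℝ≥0) : ℝ) :=
          (Real.coe_toNNReal _ (by positivity)).symm
      _ ≤ 1 := by exact_mod_cast h2
  rw [tendsto_zero_iff_norm_tendsto_zero]
  have hfm : ∀ n, (τn n / epsAt H (η n) ^ ((1 : ℝ) / (2 * (m : ℝ)))) ^ (2 * m) =
      τn n ^ (2 * m) / epsAt H (η n) := by
    intro n
    rw [div_pow]
    congr 1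
    rw [← Real.rpow_natCast (epsAt H (η n) ^ ((1 : ℝ) / (2 * (m : ℝ)))) (2 * m),
      ← Real.rpow_mul (he n).le]
    have : (1 : ℝ) / (2 * (m : ℝ)) * ((2 * m : ℕ) : ℝ) = 1 := by
      push_cast; field_simp
    rw [this, Real.rpow_one]
  apply squeeze_zero (fun n => norm_nonneg _)
    (g := fun n => (τn n / epsAt H (η n) ^ ((1 : ℝ) / (2 * (m : ℝ)))) ^ (2 * m))
  · intro n
    rw [hfm n]
    have hnormeq : ‖a (2 * m - j) * ((τn n : ℝ) : ℂ) ^ (2 * m) / ((epsAt H (η n) : ℝ) : ℂ)‖ =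
        ‖a (2 * m - j)‖ * τn n ^ (2 * m) / epsAt H (η n) := by
      rw [norm_div, norm_mul, norm_pow, Complex.norm_real, Real.norm_eq_abs,
        Complex.norm_real, Real.norm_eq_abs, _root_.abs_of_pos (hτ n).1, _root_.abs_of_pos (he n)]
    rw [hnormeq]
    exact (div_le_div_iff_of_pos_right (he n)).mpr
      (mul_le_of_le_one_left (pow_nonneg (hτ n).1.le _) haj)
  · have h := part1.pow (2 * m)
    simpa [zero_pow (by omega : 2 * m ≠ 0)] using h

end
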